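/- Let d ≥ 1, Σ a positive definite d×d matrix, θ₀, θ ∈ ℝ^d, σ ≥ 0, ε ≥ 0. Let x be a centered Gaussian random vector on ℝ^d with covariance Σ, let w ~ N(0,σ²) be independent of x, and set y = θ₀ᵀx + w. Then E[ max_{‖z‖₂≤ε} ((x+z)ᵀθ − y)² ] = E[ (|xᵀθ − y| + ε‖θ‖₂)² ] = ‖θ−θ₀‖²_Σ + σ² + ε²‖θ‖₂² + 2ε√(2/π)·‖θ‖₂·√(‖θ−θ₀‖²_Σ + σ²). -/

import Mathlib

open MeasureTheory ProbabilityTheory Real Filter Matrix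
open scoped RealInnerProductSpace BigOperators NNReal ENNReal Topology

noncomputable section

/-- The Σ-quadratic form `aᵀ Σ a`. -/
def quadForm {d : ℕ} (S : Matrix (Fin d) (Fin d) ℝ) (a : EuclideanSpace ℝ (Fin d)) : ℝ :=
  ∑ i, ∑ j, a i * S i j * a j

/-- The population adversarial risk of the linear model `f_θ(x) = θᵀx` under squared loss
and `L2` attacks of strength `ε`, for `x ~ N(0,Σ)` and `y = θ₀ᵀx + w`, `w ~ N(0,σ²)`:
`R_L(θ,ε) = ‖θ−θ₀‖²_Σ + σ² + ε²‖θ‖₂² + 2ε√(2/π)‖θ‖₂√(‖θ−θ₀‖²_Σ + σ²)`. -/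
def RL {d : ℕ} (S : Matrix (Fin d) (Fin d) ℝ) (θ0 : EuclideanSpace ℝ (Fin d))
    (σ ε : ℝ) (θ : EuclideanSpace ℝ (Fin d)) : ℝ :=
  quadForm S (θ - θ0) + σ ^ 2 + ε ^ 2 * ‖θ‖ ^ 2 +
    2 * ε * Real.sqrt (2 / Real.pi) * ‖θ‖ * Real.sqrt (quadForm S (θ - θ0) + σ ^ 2)


lemma hasDerivAt_exp_neg_mul_sq {b : ℝ} (hb : 0 < b) (x : ℝ) :
    HasDerivAt (fun t => -(2*b)⁻¹ * Real.exp (-b * t^2)) (x * Real.exp (-b * x^2)) x := by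
  have h1 : HasDerivAt (fun t : ℝ => -b * t^2) (-b * (2*x)) x := by
    simpa using ((hasDerivAt_pow 2 x).const_mul (-b))
  have h2 := (h1.exp).const_mul (-(2*b)⁻¹)
  refine h2.congr_deriv ?_
  field_simp

lemma integral_Ioi_mul_exp_neg_mul_sq {b : ℝ} (hb : 0 < b) :
    ∫ x in Set.Ioi (0:ℝ), x * Real.exp (-b * x ^ 2) = (2 * b)⁻¹ := by
  have hd : ∀ x ∈ Set.Ici (0:ℝ), HasDerivAt (fun t => -(2*b)⁻¹ * Real.exp (-b * t^2))
      (x * Real.exp (-b * x^2)) x := fun x _ => hasDerivAt_exp_neg_mul_sq hb x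
  have hint : IntegrableOn (fun x : ℝ => x * Real.exp (-b * x^2)) (Set.Ioi 0) :=
    (integrable_mul_exp_neg_mul_sq hb).integrableOn
  have hten : Tendsto (fun t => -(2*b)⁻¹ * Real.exp (-b * t^2)) atTop (nhds 0) := by
    rw [show (0:ℝ) = -(2*b)⁻¹ * 0 by ring]
    refine Tendsto.const_mul _ ?_
    refine Real.tendsto_exp_atBot.comp ?_
    have : Tendsto (fun t : ℝ => t^2) atTop atTop := tendsto_pow_atTop (by norm_num)
    exact (tendsto_neg_atBot_iff.mpr this).const_mul_atBot (by positivity) |>.congr (fun t => by ring)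
  have := integral_Ioi_of_hasDerivAt_of_tendsto' hd hint hten
  simpa using this

lemma integral_abs_mul_exp_neg_mul_sq {b : ℝ} (hb : 0 < b) :
    ∫ x : ℝ, |x| * Real.exp (-b * x ^ 2) = b⁻¹ := by
  have h : (∫ x : ℝ, |x| * Real.exp (-b * x ^ 2)) = ∫ x : ℝ, (fun t => t * Real.exp (-b * t^2)) |x| := by
    congr 1; funext x; simp [sq_abs]
  rw [h, integral_comp_abs (f := fun t => t * Real.exp (-b * t^2)),
    integral_Ioi_mul_exp_neg_mul_sq hb]
  field_simp

lemma integral_sq_mul_exp_neg_mul_sq {b : ℝ} (hb : 0 < b) :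
    ∫ x : ℝ, x ^ 2 * Real.exp (-b * x ^ 2) = (2*b)⁻¹ * Real.sqrt (π / b) := by
  have hu : ∀ x : ℝ, HasDerivAt (fun t : ℝ => t) 1 x := fun x => hasDerivAt_id x
  have hv : ∀ x : ℝ, HasDerivAt (fun t => -(2*b)⁻¹ * Real.exp (-b * t^2))
      (x * Real.exp (-b * x^2)) x := fun x => hasDerivAt_exp_neg_mul_sq hb x
  have h1 : Integrable (fun x : ℝ => x * (x * Real.exp (-b * x^2))) := by
    have h0 : Integrable (fun x : ℝ => x ^ (2:ℝ) * Real.exp (-b * x^2)) :=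
      integrable_rpow_mul_exp_neg_mul_sq hb (by norm_num)
    refine h0.congr (Eventually.of_forall fun x => ?_)
    show x ^ (2:ℝ) * Real.exp (-b * x^2) = x * (x * Real.exp (-b * x^2))
    rw [show ((2:ℝ)) = ((2:ℕ):ℝ) by norm_num, Real.rpow_natCast]; ring
  have h2 : Integrable (fun x : ℝ => 1 * (-(2*b)⁻¹ * Real.exp (-b * x^2))) := by
    simpa [one_mul] using ((integrable_exp_neg_mul_sq hb).const_mul (-(2*b)⁻¹))
  have h3 : Integrable (fun x : ℝ => x * (-(2*b)⁻¹ * Real.exp (-b * x^2))) := by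
    have := (integrable_mul_exp_neg_mul_sq hb).const_mul (-(2*b)⁻¹)
    exact this.congr (Eventually.of_forall fun x => by ring)
  have := integral_mul_deriv_eq_deriv_mul_of_integrable (fun x _ => hu x) (fun x _ => hv x) h1 h2 h3
  simp only [one_mul] at this
  have h4 : ∫ x : ℝ, x * (x * Real.exp (-b * x^2)) = ∫ x : ℝ, x^2 * Real.exp (-b * x^2) := by
    congr 1; funext x; ring
  rw [h4] at this
  rw [this, integral_const_mul, integral_gaussian]
  ring

lemma gaussianPDFReal_eq' (V : ℝ≥0) (t : ℝ) :
    gaussianPDFReal 0 V t = (Real.sqrt (2*π*V))⁻¹ * Real.exp (-(2*(V:ℝ))⁻¹ * t^2) := by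
  rw [gaussianPDFReal, sub_zero, neg_div, div_eq_inv_mul, ← neg_mul]

lemma integral_gaussianReal_eq {V : ℝ≥0} (hV : V ≠ 0) (g : ℝ → ℝ) :
    ∫ t, g t ∂(gaussianReal 0 V) = ∫ t, gaussianPDFReal 0 V t * g t := by
  rw [gaussianReal_of_var_ne_zero 0 hV]
  have hm : Measurable (fun t => (gaussianPDFReal 0 V t).toNNReal) :=
    (measurable_gaussianPDFReal 0 V).real_toNNReal
  rw [show (gaussianPDF 0 V) = fun t => ((gaussianPDFReal 0 V t).toNNReal : ℝ≥0∞) from rfl]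
  rw [integral_withDensity_eq_integral_smul hm g]
  congr 1; funext t
  simp [NNReal.smul_def, Real.coe_toNNReal _ (gaussianPDFReal_nonneg 0 V t)]

lemma sqrt_two_pi_V_pos {V : ℝ≥0} (hV : V ≠ 0) : 0 < Real.sqrt (2*π*V) := by
  have : (0:ℝ) < V := by positivity
  have := Real.pi_pos
  exact Real.sqrt_pos.mpr (by positivity)

lemma alg_aux {V : ℝ≥0} (hV : V ≠ 0) :
    (Real.sqrt (2*π*(V:ℝ)))⁻¹ * (2*(V:ℝ)) = Real.sqrt (2/π) * Real.sqrt V := by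
  have hVpos : (0:ℝ) < V := by positivity
  have hpi := Real.pi_pos
  rw [inv_mul_eq_iff_eq_mul₀ (sqrt_two_pi_V_pos hV).ne']
  rw [← Real.sqrt_mul (by positivity), ← Real.sqrt_mul (by positivity)]
  rw [show (2*π*(V:ℝ)) * (2/π*(V:ℝ)) = (2*(V:ℝ))^2 by field_simp]
  rw [Real.sqrt_sq (by positivity)]

lemma key_integral (V : ℝ≥0) (c : ℝ) :
    ∫ t, (|t| + c)^2 ∂(gaussianReal 0 V) =
      V + c^2 + 2*c*(Real.sqrt (2/π) * Real.sqrt V) := by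
  rcases eq_or_ne V 0 with rfl | hV
  · rw [gaussianReal_zero_var]
    rw [integral_dirac (fun t : ℝ => (|t| + c)^2)]
    simp
  · have hVpos : (0:ℝ) < V := by positivity
    set b : ℝ := (2*(V:ℝ))⁻¹ with hbdef
    have hb : 0 < b := by positivity
    set A : ℝ := (Real.sqrt (2*π*V))⁻¹ with hAdef
    have hA : 0 < A := inv_pos.mpr (sqrt_two_pi_V_pos hV)
    rw [integral_gaussianReal_eq hV]
    have hpt : ∀ t : ℝ, gaussianPDFReal 0 V t * (|t| + c)^2 =
        A * (t^2 * Real.exp (-b*t^2)) + ((2*c*A) * (|t| * Real.exp (-b*t^2))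
          + (c^2*A) * Real.exp (-b*t^2)) := by
      intro t
      rw [gaussianPDFReal_eq', add_sq, sq_abs]
      ring
    rw [integral_congr_ae (Eventually.of_forall hpt)]
    have i1 : Integrable (fun t : ℝ => t^2 * Real.exp (-b*t^2)) := by
      have h0 : Integrable (fun x : ℝ => x ^ (2:ℝ) * Real.exp (-b * x^2)) :=
        integrable_rpow_mul_exp_neg_mul_sq hb (by norm_num)
      refine h0.congr (Eventually.of_forall fun x => ?_)
      show x ^ (2:ℝ) * Real.exp (-b * x^2) = x^2 * Real.exp (-b * x^2)
      rw [show ((2:ℝ)) = ((2:ℕ):ℝ) by norm_num, Real.rpow_natCast]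
    have i2 : Integrable (fun t : ℝ => |t| * Real.exp (-b*t^2)) := by
      refine (integrable_mul_exp_neg_mul_sq hb).abs.congr (Eventually.of_forall fun x => ?_)
      show |x * Real.exp (-b*x^2)| = |x| * Real.exp (-b*x^2)
      rw [abs_mul, abs_of_nonneg (Real.exp_pos _).le]
    have i3 : Integrable (fun t : ℝ => Real.exp (-b*t^2)) := integrable_exp_neg_mul_sq hb
    have i2' : Integrable (fun t : ℝ => 2*c*A * (|t| * Real.exp (-b*t^2))) := i2.const_mul _
    have i3' : Integrable (fun t : ℝ => c^2*A * Real.exp (-b*t^2)) := i3.const_mul _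
    have i23 : Integrable (fun t : ℝ => 2*c*A * (|t| * Real.exp (-b*t^2))
        + c^2*A * Real.exp (-b*t^2)) := i2'.add i3'
    rw [integral_add (i1.const_mul A) i23,
      integral_add i2' i3',
      integral_const_mul, integral_const_mul, integral_const_mul,
      integral_sq_mul_exp_neg_mul_sq hb, integral_abs_mul_exp_neg_mul_sq hb,
      integral_gaussian]
    have e1 : (2*b)⁻¹ = (V:ℝ) := by rw [hbdef]; field_simp
    have e2 : b⁻¹ = 2*(V:ℝ) := by rw [hbdef]; field_simp
    have e3 : π/b = 2*π*(V:ℝ) := by rw [hbdef]; field_simp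
    rw [e1, e2, e3]
    have e4 : A * Real.sqrt (2*π*(V:ℝ)) = 1 := inv_mul_cancel₀ (sqrt_two_pi_V_pos hV).ne'
    have e5 : A * (2*(V:ℝ)) = Real.sqrt (2/π) * Real.sqrt V := alg_aux hV
    calc A * ((V:ℝ) * Real.sqrt (2*π*(V:ℝ))) + (2*c*A * (2*(V:ℝ)) + c^2*A * Real.sqrt (2*π*(V:ℝ)))
        = (V:ℝ) * (A * Real.sqrt (2*π*(V:ℝ))) + (2*c*(A * (2*(V:ℝ))) + c^2*(A * Real.sqrt (2*π*(V:ℝ)))) := by ring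
      _ = (V:ℝ) + c^2 + 2*c*(Real.sqrt (2/π) * Real.sqrt V) := by rw [e4, e5]; ring


lemma gaussianPDFReal_factor {v₁ v₂ : ℝ≥0} (h₁ : v₁ ≠ 0) (h₂ : v₂ ≠ 0) (t u : ℝ) :
    gaussianPDFReal 0 v₁ u * gaussianPDFReal 0 v₂ (t - u) =
      ((Real.sqrt (2*π*v₁))⁻¹ * (Real.sqrt (2*π*v₂))⁻¹
          * Real.exp (-(t^2) / (2*((v₁:ℝ)+v₂)))) *
        Real.exp (-(((v₁:ℝ)+v₂)/(2*v₁*v₂)) * (u - (v₁:ℝ)*t/((v₁:ℝ)+v₂))^2) := by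
  have h1 : (0:ℝ) < v₁ := by positivity
  have h2 : (0:ℝ) < v₂ := by positivity
  have h12 : (0:ℝ) < (v₁:ℝ) + v₂ := by positivity
  have key : Real.exp (-(u - 0)^2 / (2*(v₁:ℝ))) * Real.exp (-(t - u - 0)^2 / (2*(v₂:ℝ)))
      = Real.exp (-(t^2) / (2*((v₁:ℝ)+v₂)))
        * Real.exp (-(((v₁:ℝ)+v₂)/(2*v₁*v₂)) * (u - (v₁:ℝ)*t/((v₁:ℝ)+v₂))^2) := by
    rw [← Real.exp_add, ← Real.exp_add]
    congr 1
    field_simp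
    ring
  rw [gaussianPDFReal, gaussianPDFReal]
  calc (Real.sqrt (2*π*v₁))⁻¹ * Real.exp (-(u - 0)^2 / (2*(v₁:ℝ)))
        * ((Real.sqrt (2*π*v₂))⁻¹ * Real.exp (-(t - u - 0)^2 / (2*(v₂:ℝ))))
      = (Real.sqrt (2*π*v₁))⁻¹ * (Real.sqrt (2*π*v₂))⁻¹
        * (Real.exp (-(u - 0)^2 / (2*(v₁:ℝ))) * Real.exp (-(t - u - 0)^2 / (2*(v₂:ℝ)))) := by
        ring
    _ = _ := by rw [key]; ring

lemma gaussian_const_identity {v₁ v₂ : ℝ≥0} (h₁ : v₁ ≠ 0) (h₂ : v₂ ≠ 0) :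
    (Real.sqrt (2*π*v₁))⁻¹ * (Real.sqrt (2*π*v₂))⁻¹
        * Real.sqrt (π / (((v₁:ℝ)+v₂)/(2*v₁*v₂)))
      = (Real.sqrt (2*π*((v₁:ℝ)+v₂)))⁻¹ := by
  have h1 : (0:ℝ) < v₁ := by positivity
  have h2 : (0:ℝ) < v₂ := by positivity
  have h12 : (0:ℝ) < (v₁:ℝ) + v₂ := by positivity
  have hpi := Real.pi_pos
  rw [← Real.sqrt_inv, ← Real.sqrt_inv, ← Real.sqrt_inv,
    ← Real.sqrt_mul (by positivity), ← Real.sqrt_mul (by positivity)]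
  congr 1
  field_simp

lemma integrable_gauss_factor {v₁ v₂ : ℝ≥0} (h₁ : v₁ ≠ 0) (h₂ : v₂ ≠ 0) (t : ℝ) :
    Integrable (fun u => gaussianPDFReal 0 v₁ u * gaussianPDFReal 0 v₂ (t - u)) := by
  have h1 : (0:ℝ) < v₁ := by positivity
  have h2 : (0:ℝ) < v₂ := by positivity
  have hp : (0:ℝ) < ((v₁:ℝ)+v₂)/(2*v₁*v₂) := by positivity
  have : Integrable (fun u : ℝ =>
      Real.exp (-(((v₁:ℝ)+v₂)/(2*v₁*v₂)) * (u - (v₁:ℝ)*t/((v₁:ℝ)+v₂))^2)) := by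
    exact (integrable_exp_neg_mul_sq hp).comp_sub_right _
  exact Integrable.congr (this.const_mul ((Real.sqrt (2*π*v₁))⁻¹ * (Real.sqrt (2*π*v₂))⁻¹
      * Real.exp (-(t^2) / (2*((v₁:ℝ)+v₂)))))
    (Eventually.of_forall fun u => (gaussianPDFReal_factor h₁ h₂ t u).symm)

lemma gaussianPDFReal_conv {v₁ v₂ : ℝ≥0} (h₁ : v₁ ≠ 0) (h₂ : v₂ ≠ 0) (t : ℝ) :
    ∫ u, gaussianPDFReal 0 v₁ u * gaussianPDFReal 0 v₂ (t - u)
      = gaussianPDFReal 0 (v₁+v₂) t := by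
  have h1 : (0:ℝ) < v₁ := by positivity
  have h2 : (0:ℝ) < v₂ := by positivity
  have hp : (0:ℝ) < ((v₁:ℝ)+v₂)/(2*v₁*v₂) := by positivity
  rw [integral_congr_ae (Eventually.of_forall (gaussianPDFReal_factor h₁ h₂ t)),
    integral_const_mul,
    integral_sub_right_eq_self (fun u : ℝ =>
      Real.exp (-(((v₁:ℝ)+v₂)/(2*v₁*v₂)) * u^2)) ((v₁:ℝ)*t/((v₁:ℝ)+v₂)),
    integral_gaussian]
  rw [gaussianPDFReal, sub_zero]
  have hc := gaussian_const_identity h₁ h₂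
  have hcoe : ((v₁ + v₂ : ℝ≥0) : ℝ) = (v₁:ℝ) + v₂ := by push_cast; ring
  rw [hcoe]
  calc (Real.sqrt (2*π*v₁))⁻¹ * (Real.sqrt (2*π*v₂))⁻¹ * Real.exp (-(t^2) / (2*((v₁:ℝ)+v₂)))
        * Real.sqrt (π / (((v₁:ℝ)+v₂)/(2*v₁*v₂)))
      = ((Real.sqrt (2*π*v₁))⁻¹ * (Real.sqrt (2*π*v₂))⁻¹
          * Real.sqrt (π / (((v₁:ℝ)+v₂)/(2*v₁*v₂)))) * Real.exp (-(t^2) / (2*((v₁:ℝ)+v₂))) := by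
        ring
    _ = (Real.sqrt (2*π*((v₁:ℝ)+v₂)))⁻¹ * Real.exp (-(t - 0)^2 / (2*((v₁:ℝ)+v₂))) := by
        rw [hc, sub_zero]
  rw [sub_zero]



lemma gaussian_conv (v₁ v₂ : ℝ≥0) :
    Measure.map (fun p : ℝ × ℝ => p.1 + p.2)
        ((gaussianReal 0 v₁).prod (gaussianReal 0 v₂)) = gaussianReal 0 (v₁ + v₂) := by
  rcases eq_or_ne v₁ 0 with rfl | h₁
  · rw [gaussianReal_zero_var, Measure.dirac_prod,
      Measure.map_map (by fun_prop) (by fun_prop)]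
    simp [Function.comp_def, zero_add]
  rcases eq_or_ne v₂ 0 with rfl | h₂
  · rw [gaussianReal_zero_var, Measure.prod_dirac,
      Measure.map_map (by fun_prop) (by fun_prop)]
    simp [Function.comp_def, add_zero]
  have h₁₂ : v₁ + v₂ ≠ 0 := by simp [h₁]
  ext E hE
  rw [Measure.map_apply (by fun_prop) hE,
    Measure.prod_apply (hE.preimage (by fun_prop))]
  have step1 : ∀ u : ℝ, (gaussianReal 0 v₂) (Prod.mk u ⁻¹' ((fun p : ℝ×ℝ => p.1+p.2) ⁻¹' E))
      = ∫⁻ t in E, ENNReal.ofReal (gaussianPDFReal 0 v₂ (t - u)) := by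
    intro u
    have hpre : (Prod.mk u ⁻¹' ((fun p : ℝ×ℝ => p.1+p.2) ⁻¹' E)) = (fun y => u + y) ⁻¹' E := rfl
    rw [hpre, ← Measure.map_apply (by fun_prop) hE, gaussianReal_map_const_add,
      gaussianReal_apply _ h₂ E, zero_add]
    congr 1; funext t
    rw [show gaussianPDF u v₂ t = ENNReal.ofReal (gaussianPDFReal u v₂ t) from rfl,
      gaussianPDFReal_sub, zero_add]
  calc ∫⁻ u, (gaussianReal 0 v₂) (Prod.mk u ⁻¹' ((fun p : ℝ×ℝ => p.1+p.2) ⁻¹' E))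
        ∂(gaussianReal 0 v₁)
      = ∫⁻ u, (∫⁻ t in E, ENNReal.ofReal (gaussianPDFReal 0 v₂ (t - u)))
          ∂(gaussianReal 0 v₁) := by
        exact lintegral_congr step1
    _ = ∫⁻ u, ENNReal.ofReal (gaussianPDFReal 0 v₁ u)
          * (∫⁻ t in E, ENNReal.ofReal (gaussianPDFReal 0 v₂ (t - u))) := by
        rw [gaussianReal_of_var_ne_zero 0 h₁]
        rw [lintegral_withDensity_eq_lintegral_mul _ (measurable_gaussianPDF 0 v₁) ?_]
        · rfl
        · apply Measurable.lintegral_prod_right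
          exact ((measurable_gaussianPDFReal 0 v₂).comp
            (measurable_snd.sub measurable_fst)).ennreal_ofReal
    _ = ∫⁻ u, (∫⁻ t in E, ENNReal.ofReal (gaussianPDFReal 0 v₁ u)
          * ENNReal.ofReal (gaussianPDFReal 0 v₂ (t - u))) := by
        congr 1; funext u
        rw [← lintegral_const_mul' _ _ ENNReal.ofReal_ne_top]
    _ = ∫⁻ t in E, (∫⁻ u, ENNReal.ofReal (gaussianPDFReal 0 v₁ u)
          * ENNReal.ofReal (gaussianPDFReal 0 v₂ (t - u))) := by
        apply lintegral_lintegral_swap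
        apply Measurable.aemeasurable
        exact (((measurable_gaussianPDFReal 0 v₁).comp measurable_fst).ennreal_ofReal).mul
          (((measurable_gaussianPDFReal 0 v₂).comp
            (measurable_snd.sub measurable_fst)).ennreal_ofReal)
    _ = ∫⁻ t in E, ENNReal.ofReal (gaussianPDFReal 0 (v₁ + v₂) t) := by
        apply setLIntegral_congr_fun hE
        intro t _
        dsimp only
        rw [← gaussianPDFReal_conv h₁ h₂ t,
          ofReal_integral_eq_lintegral_ofReal (integrable_gauss_factor h₁ h₂ t)
            (Eventually.of_forall fun u => mul_nonneg (gaussianPDFReal_nonneg _ _ _)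
              (gaussianPDFReal_nonneg _ _ _))]
        congr 1; funext u
        rw [ENNReal.ofReal_mul (gaussianPDFReal_nonneg _ _ _)]
    _ = gaussianReal 0 (v₁ + v₂) E := (gaussianReal_apply _ h₁₂ E).symm

lemma map_add_of_gaussian {Ω : Type} [MeasurableSpace Ω] {μ : Measure Ω}
    [IsProbabilityMeasure μ] {X Y : Ω → ℝ} (hX : Measurable X) (hY : Measurable Y)
    (h : IndepFun X Y μ) {v₁ v₂ : ℝ≥0} (h1 : Measure.map X μ = gaussianReal 0 v₁)
    (h2 : Measure.map Y μ = gaussianReal 0 v₂) :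
    Measure.map (fun ω => X ω + Y ω) μ = gaussianReal 0 (v₁ + v₂) := by
  have hjoint : Measure.map (fun ω => (X ω, Y ω)) μ
      = (gaussianReal 0 v₁).prod (gaussianReal 0 v₂) := by
    rw [← h1, ← h2]
    exact (indepFun_iff_map_prod_eq_prod_map_map hX.aemeasurable hY.aemeasurable).mp h
  have hcomp : (fun ω => X ω + Y ω)
      = (fun p : ℝ×ℝ => p.1 + p.2) ∘ (fun ω => (X ω, Y ω)) := rfl
  rw [hcomp, ← Measure.map_map (by fun_prop) (hX.prodMk hY), hjoint, gaussian_conv]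

lemma quadForm_nonneg {d : ℕ} {S : Matrix (Fin d) (Fin d) ℝ} (hS : S.PosDef)
    (a : EuclideanSpace ℝ (Fin d)) : 0 ≤ quadForm S a := by
  have hq : quadForm S a = star (a : Fin d → ℝ) ⬝ᵥ (S *ᵥ (a : Fin d → ℝ)) := by
    simp only [quadForm, dotProduct, Matrix.mulVec, star_trivial]
    refine Finset.sum_congr rfl fun i _ => ?_
    rw [Finset.mul_sum]
    exact Finset.sum_congr rfl fun j _ => by ring
  rcases eq_or_ne a 0 with rfl | ha
  · simp [quadForm]
  · exact le_of_lt (by rw [hq]; exact hS.dotProduct_mulVec_pos (fun h => ha (by ext i; exact congrFun h i)))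

lemma sSup_adv {d : ℕ} (θ : EuclideanSpace ℝ (Fin d)) {ε : ℝ} (hε : 0 ≤ ε) (a : ℝ) :
    sSup ((fun z : EuclideanSpace ℝ (Fin d) => (a + ⟪θ, z⟫)^2) '' Metric.closedBall 0 ε)
      = (|a| + ε * ‖θ‖)^2 := by
  have hmem0 : (0 : EuclideanSpace ℝ (Fin d)) ∈
      Metric.closedBall (0 : EuclideanSpace ℝ (Fin d)) ε := Metric.mem_closedBall_self hε
  have hb : ∀ r ∈ (fun z : EuclideanSpace ℝ (Fin d) => (a + ⟪θ, z⟫)^2) ''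
      Metric.closedBall 0 ε, r ≤ (|a| + ε * ‖θ‖)^2 := by
    rintro r ⟨z, hz, rfl⟩
    have hz' : ‖z‖ ≤ ε := by
      simpa [dist_zero_right] using Metric.mem_closedBall.mp hz
    have h1 : |⟪θ, z⟫| ≤ ‖θ‖ * ε := by
      refine (abs_real_inner_le_norm θ z).trans ?_
      have := norm_nonneg θ
      nlinarith
    have h2 : |a + ⟪θ, z⟫| ≤ |a| + ε * ‖θ‖ := by
      refine (abs_add_le _ _).trans ?_
      nlinarith
    calc (a + ⟪θ, z⟫)^2 = |a + ⟪θ, z⟫|^2 := (sq_abs _).symm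
      _ ≤ (|a| + ε * ‖θ‖)^2 := pow_le_pow_left₀ (abs_nonneg _) h2 2
  apply le_antisymm
  · exact csSup_le ⟨_, Set.mem_image_of_mem _ hmem0⟩ hb
  · rcases eq_or_ne θ 0 with rfl | hθ
    · apply le_csSup ⟨_, hb⟩
      refine ⟨0, hmem0, ?_⟩
      simp [sq_abs]
    · have hθ0 : 0 < ‖θ‖ := norm_pos_iff.mpr hθ
      set s : ℝ := if 0 ≤ a then 1 else -1 with hsdef
      have hs : |s| = 1 := by
        by_cases h : 0 ≤ a <;> simp [hsdef, h]
      set z₀ : EuclideanSpace ℝ (Fin d) := (s * ε / ‖θ‖) • θ with hz₀def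
      have hz₀ : z₀ ∈ Metric.closedBall (0 : EuclideanSpace ℝ (Fin d)) ε := by
        rw [Metric.mem_closedBall, dist_zero_right, hz₀def, norm_smul]
        rw [Real.norm_eq_abs, abs_div, abs_mul, hs, abs_of_nonneg hε, one_mul, abs_norm]
        rw [div_mul_cancel₀ _ hθ0.ne']
      have hval : ⟪θ, z₀⟫ = s * (ε * ‖θ‖) := by
        rw [hz₀def, real_inner_smul_right, real_inner_self_eq_norm_sq]
        field_simp
      apply le_csSup ⟨_, hb⟩
      refine ⟨z₀, hz₀, ?_⟩
      show (a + ⟪θ, z₀⟫)^2 = (|a| + ε * ‖θ‖)^2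
      rw [hval]
      by_cases h : 0 ≤ a
      · rw [abs_of_nonneg h, hsdef, if_pos h]
        ring
      · rw [abs_of_neg (lt_of_not_ge h), hsdef, if_neg h]
        ring

/-- For `x` a centered Gaussian vector with covariance `Σ`, `w ~ N(0,σ²)`
independent of `x`, and `y = θ₀ᵀx + w`, the expected adversarial squared loss of the linear
model satisfies
`E[max_{‖z‖≤ε} ((x+z)ᵀθ − y)²] = E[(|xᵀθ − y| + ε‖θ‖)²] = R_L(θ,ε)`.
A centered Gaussian vector with covariance `Σ` is characterized by all of its one-dimensional
projections `⟪u, x⟫` having law `N(0, uᵀΣu)`. -/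
theorem adversarial_risk_closed_form
    {d : ℕ} (hd : 1 ≤ d) (S : Matrix (Fin d) (Fin d) ℝ) (hS : S.PosDef)
    (θ0 θ : EuclideanSpace ℝ (Fin d)) (σ ε : ℝ) (hσ : 0 ≤ σ) (hε : 0 ≤ ε)
    {Ω : Type} [MeasurableSpace Ω] (μ : Measure Ω) [IsProbabilityMeasure μ]
    (x : Ω → EuclideanSpace ℝ (Fin d)) (w : Ω → ℝ)
    (hxm : Measurable x) (hwm : Measurable w)
    (hx : ∀ u : EuclideanSpace ℝ (Fin d),
      Measure.map (fun ω => ⟪u, x ω⟫) μ = gaussianReal 0 (Real.toNNReal (quadForm S u)))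
    (hw : Measure.map w μ = gaussianReal 0 (Real.toNNReal (σ ^ 2)))
    (hindep : IndepFun x w μ)
    (y : Ω → ℝ) (hy : ∀ ω, y ω = ⟪θ0, x ω⟫ + w ω) :
    (∫ ω, sSup ((fun z => (⟪θ, x ω + z⟫ - y ω) ^ 2) '' Metric.closedBall 0 ε) ∂μ
        = ∫ ω, (|⟪θ, x ω⟫ - y ω| + ε * ‖θ‖) ^ 2 ∂μ) ∧
    (∫ ω, (|⟪θ, x ω⟫ - y ω| + ε * ‖θ‖) ^ 2 ∂μ = RL S θ0 σ ε θ)     := by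
  have hq : 0 ≤ quadForm S (θ - θ0) := quadForm_nonneg hS _
  constructor
  · refine integral_congr_ae (Eventually.of_forall fun ω => ?_)
    show sSup ((fun z => (⟪θ, x ω + z⟫ - y ω) ^ 2) '' Metric.closedBall 0 ε)
      = (|⟪θ, x ω⟫ - y ω| + ε * ‖θ‖) ^ 2
    have hfun : (fun z : EuclideanSpace ℝ (Fin d) => (⟪θ, x ω + z⟫ - y ω) ^ 2)
        = (fun z => ((⟪θ, x ω⟫ - y ω) + ⟪θ, z⟫) ^ 2) := by
      funext z
      rw [inner_add_right]
      ring
    rw [hfun, sSup_adv θ hε (⟪θ, x ω⟫ - y ω)]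
  · set c : ℝ := ε * ‖θ‖ with hcdef
    set X : Ω → ℝ := fun ω => ⟪θ - θ0, x ω⟫ with hXdef
    set Y : Ω → ℝ := fun ω => -(w ω) with hYdef
    have hXm : Measurable X := measurable_const.inner hxm
    have hYm : Measurable Y := hwm.neg
    have hYlaw : Measure.map Y μ = gaussianReal 0 (Real.toNNReal (σ ^ 2)) := by
      have h0 : Measure.map Y μ = Measure.map (fun t : ℝ => -1 * t) (Measure.map w μ) := by
        rw [Measure.map_map (by fun_prop) hwm]
        congr 1
        funext ω
        show Y ω = -1 * w ω
        rw [hYdef]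
        ring
      have h3 : (NNReal.mk ((-1:ℝ)^2) (sq_nonneg _)) = 1 := by ext; norm_num
      rw [h0, hw, gaussianReal_map_const_mul (-1), h3, one_mul,
        show ((-1:ℝ) * 0) = 0 by ring]
    have hind : IndepFun X Y μ :=
      hindep.comp (measurable_const.inner measurable_id) measurable_neg
    have hsum := map_add_of_gaussian hXm hYm hind (hx (θ - θ0)) hYlaw
    have hVadd : Real.toNNReal (quadForm S (θ - θ0)) + Real.toNNReal (σ^2)
        = Real.toNNReal (quadForm S (θ - θ0) + σ^2) :=
      (Real.toNNReal_add hq (sq_nonneg σ)).symm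
    rw [hVadd] at hsum
    have hpt : ∀ ω, (|⟪θ, x ω⟫ - y ω| + ε * ‖θ‖) ^ 2 = (|X ω + Y ω| + c)^2 := by
      intro ω
      have : ⟪θ, x ω⟫ - y ω = X ω + Y ω := by
        rw [hy ω, hXdef, hYdef]
        show ⟪θ, x ω⟫ - (⟪θ0, x ω⟫ + w ω) = ⟪θ - θ0, x ω⟫ + -(w ω)
        rw [inner_sub_left]
        ring
      rw [this, hcdef]
    rw [integral_congr_ae (Eventually.of_forall hpt)]
    have hmap : ∫ ω, (|X ω + Y ω| + c)^2 ∂μ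
        = ∫ t, (|t| + c)^2 ∂(Measure.map (fun ω => X ω + Y ω) μ) := by
      rw [integral_map (φ := fun ω => X ω + Y ω) (hXm.add hYm).aemeasurable]
      exact Continuous.aestronglyMeasurable (by fun_prop)
    rw [hmap, hsum, key_integral _ c]
    have hVcoe : ((Real.toNNReal (quadForm S (θ - θ0) + σ^2) : ℝ≥0) : ℝ)
        = quadForm S (θ - θ0) + σ^2 := Real.coe_toNNReal _ (by positivity)
    rw [hVcoe]
    show quadForm S (θ - θ0) + σ^2 + c^2
        + 2*c*(Real.sqrt (2/π) * Real.sqrt (quadForm S (θ - θ0) + σ^2))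
      = quadForm S (θ - θ0) + σ ^ 2 + ε ^ 2 * ‖θ‖ ^ 2 +
        2 * ε * Real.sqrt (2 / Real.pi) * ‖θ‖ * Real.sqrt (quadForm S (θ - θ0) + σ ^ 2)
    rw [hcdef]
    ring


end
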